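/- arXiv:2603.12024 — 5 statements merged into one kernel-verified Lean document; each statement's English description precedes it below -/
import Mathlib

section
/- Let {M^{a|x}} be a finite family of POVMs on ℂ^d (a ∈ A, x ∈ X) and let |ψ⟩ ∈ ℂ^d ⊗ ℂ^d be a pure state of Schmidt rank d. Define the assemblage σ^{a|x} = Tr_A[(M^{a|x} ⊗ 𝟙)|ψ⟩⟨ψ|]. If the assemblage is star-unsteerable with respect to x* (i.e., there exist positive semidefinite operators ρ^{a,b|x} on ℂ^d, for x ≠ x*, with Σ_b ρ^{a,b|x} = σ^{a|x} for all a and Σ_a ρ^{a,b|x} = σ^{b|x*} for all b), then the PMD {M^{a|x}} is star-compatible with respect to x*: there exist POVMs {J^{a,b|x}}_{a,b∈A} for each x ≠ x* with Σ_b J^{a,b|x} = M^{a|x} and Σ_a J^{a,b|x} = M^{b|x*}. -/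
open Matrix BigOperators Kronecker ComplexOrder

/-- Partial trace over the first tensor factor. -/
noncomputable def trA {dA dB : Type*} [Fintype dA]
    (M : Matrix (dA × dB) (dA × dB) ℂ) : Matrix dB dB ℂ :=
  Matrix.of fun j j' => ∑ i, M (i, j) (i, j')

lemma trA_kron_eq (d : ℕ) (ψ : Fin d × Fin d → ℂ) (N : Matrix (Fin d) (Fin d) ℂ) :
    trA ((N ⊗ₖ (1 : Matrix (Fin d) (Fin d) ℂ)) * Matrix.vecMulVec ψ (star ψ))
      = ((Matrix.of fun i j : Fin d => ψ (i, j))ᴴ * N *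
          (Matrix.of fun i j : Fin d => ψ (i, j)))ᵀ := by
  ext j j'
  simp only [trA, Matrix.of_apply, Matrix.transpose_apply, Matrix.mul_apply,
    Matrix.kroneckerMap_apply, Matrix.vecMulVec_apply, Matrix.conjTranspose_apply,
    Fintype.sum_prod_type, Matrix.one_apply, Pi.star_apply, mul_ite, mul_one, mul_zero,
    ite_mul, zero_mul, Finset.sum_ite_eq, Finset.mem_univ, if_true, Finset.sum_mul]
  rw [Finset.sum_comm]
  exact Finset.sum_congr rfl fun k _ => Finset.sum_congr rfl fun i _ => by ring

/-- if the assemblage produced by a PMD on a Schmidt-rank-d pure state is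
star-unsteerable w.r.t. x*, then the PMD is star-compatible w.r.t. x*. -/
theorem starUnsteerable_imp_starCompatible (d : ℕ) (hd : 0 < d)
    (A X : Type) [Fintype A] [Fintype X] (xs : X)
    (M : X → A → Matrix (Fin d) (Fin d) ℂ)
    (hpsd : ∀ x a, (M x a).PosSemidef) (hpovm : ∀ x, ∑ a, M x a = 1)
    (ψ : Fin d × Fin d → ℂ)
    (hnorm : ∑ p : Fin d × Fin d, Complex.normSq (ψ p) = 1)
    (hrank : (Matrix.of fun i j : Fin d => ψ (i, j)).rank = d)
    (hunst : ∃ ρ : X → A → A → Matrix (Fin d) (Fin d) ℂ,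
      (∀ x, x ≠ xs → ∀ a b, (ρ x a b).PosSemidef) ∧
      (∀ x, x ≠ xs → ∀ a, ∑ b, ρ x a b
          = trA ((M x a ⊗ₖ (1 : Matrix (Fin d) (Fin d) ℂ)) * Matrix.vecMulVec ψ (star ψ))) ∧
      (∀ x, x ≠ xs → ∀ b, ∑ a, ρ x a b
          = trA ((M xs b ⊗ₖ (1 : Matrix (Fin d) (Fin d) ℂ)) * Matrix.vecMulVec ψ (star ψ)))) :
    ∃ J : X → A → A → Matrix (Fin d) (Fin d) ℂ,
      (∀ x, x ≠ xs → ∀ a b, (J x a b).PosSemidef) ∧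
      (∀ x, x ≠ xs → ∑ a, ∑ b, J x a b = 1) ∧
      (∀ x, x ≠ xs → ∀ a, ∑ b, J x a b = M x a) ∧
      (∀ x, x ≠ xs → ∀ b, ∑ a, J x a b = M xs b) := by
  obtain ⟨ρ, hρpsd, hρ1, hρ2⟩ := hunst
  set Ψ : Matrix (Fin d) (Fin d) ℂ := Matrix.of fun i j : Fin d => ψ (i, j) with hΨdef
  -- Ψ is invertible
  have hsurj : Function.Surjective Ψ.mulVecLin := by
    rw [← LinearMap.range_eq_top]
    apply Submodule.eq_top_of_finrank_eq
    rw [← Matrix.rank, hrank, Module.finrank_fintype_fun_eq_card, Fintype.card_fin]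
  have hunit : IsUnit Ψ := by
    rw [← Matrix.mulVec_surjective_iff_isUnit]
    exact hsurj
  have hdet : IsUnit Ψ.det := (Matrix.isUnit_iff_isUnit_det Ψ).mp hunit
  have hdetH : IsUnit Ψᴴ.det := by
    rw [Matrix.det_conjTranspose]; exact hdet.star
  -- Define J
  set B : Matrix (Fin d) (Fin d) ℂ := Ψᴴ⁻¹ with hBdef
  have hBH : Bᴴ = Ψ⁻¹ := by
    rw [hBdef, Matrix.conjTranspose_nonsing_inv, Matrix.conjTranspose_conjTranspose]
  have hB1 : B * Ψᴴ = 1 := Matrix.nonsing_inv_mul _ hdetH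
  have hB2 : Ψ * Bᴴ = 1 := by rw [hBH]; exact Matrix.mul_nonsing_inv _ hdet
  have key : ∀ N : Matrix (Fin d) (Fin d) ℂ, B * (Ψᴴ * N * Ψ)ᵀᵀ * Bᴴ = N := by
    intro N
    rw [Matrix.transpose_transpose, ← Matrix.mul_assoc, ← Matrix.mul_assoc, hB1, Matrix.one_mul,
      Matrix.mul_assoc, hB2, Matrix.mul_one]
  refine ⟨fun x a b => B * (ρ x a b)ᵀ * Bᴴ, ?_, ?_, ?_, ?_⟩
  · intro x hx a b
    exact ((hρpsd x hx a b).transpose).mul_mul_conjTranspose_same B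
  · intro x hx
    have : ∀ a, ∑ b, B * (ρ x a b)ᵀ * Bᴴ = M x a := by
      intro a
      have := hρ1 x hx a
      rw [trA_kron_eq] at this
      calc ∑ b, B * (ρ x a b)ᵀ * Bᴴ = B * (∑ b, ρ x a b)ᵀ * Bᴴ := by
            simp [Matrix.transpose_sum, Finset.mul_sum, Finset.sum_mul]
        _ = M x a := by rw [this]; exact key (M x a)
    rw [Finset.sum_congr rfl fun a _ => this a, hpovm]
  · intro x hx a
    have := hρ1 x hx a
    rw [trA_kron_eq] at this
    calc ∑ b, B * (ρ x a b)ᵀ * Bᴴ = B * (∑ b, ρ x a b)ᵀ * Bᴴ := by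
          simp [Matrix.transpose_sum, Finset.mul_sum, Finset.sum_mul]
      _ = M x a := by rw [this]; exact key (M x a)
  · intro x hx b
    have := hρ2 x hx b
    rw [trA_kron_eq] at this
    calc ∑ a, B * (ρ x a b)ᵀ * Bᴴ = B * (∑ a, ρ x a b)ᵀ * Bᴴ := by
          simp [Matrix.transpose_sum, Finset.mul_sum, Finset.sum_mul]
      _ = M xs b := by rw [this]; exact key (M xs b)
end

section
/- Contrapositive form: if a PMD {M^{a|x}} on ℂ^d is star-incompatible with respect to x*, then for every pure bipartite state |ψ⟩ ∈ ℂ^d ⊗ ℂ^d of Schmidt rank d, the assemblage σ^{a|x} = Tr_A[(M^{a|x} ⊗ 𝟙)|ψ⟩⟨ψ|] is star-steerable with respect to x* (i.e., it admits no star-unsteerable decomposition). -/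
open Matrix BigOperators Kronecker ComplexOrder

-- key computation: trA((M ⊗ 1) ψψ*) = C Mᵀ Cᴴ where C = Ψᵀ
lemma trA_formula (d : ℕ) (M : Matrix (Fin d) (Fin d) ℂ) (ψ : Fin d × Fin d → ℂ) :
    trA ((M ⊗ₖ (1 : Matrix (Fin d) (Fin d) ℂ)) * Matrix.vecMulVec ψ (star ψ))
      = (Matrix.of fun i j : Fin d => ψ (i, j))ᵀ * Mᵀ *
        ((Matrix.of fun i j : Fin d => ψ (i, j))ᵀ)ᴴ := by
  ext j j'
  simp only [trA, Matrix.of_apply, Matrix.mul_apply, Matrix.vecMulVec_apply,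
    Matrix.kroneckerMap_apply, Matrix.one_apply, Matrix.transpose_apply,
    Matrix.conjTranspose_apply, Pi.star_apply]
  rw [Finset.sum_comm]
  rw [← Finset.univ_product_univ, Finset.sum_product]
  refine (Finset.sum_congr rfl fun x _ => Finset.sum_comm).trans ?_
  simp only [mul_ite, mul_one, mul_zero, ite_mul, zero_mul, Finset.sum_ite_eq, Finset.mem_univ,
    if_true]
  rw [Finset.sum_comm]
  refine Finset.sum_congr rfl fun i _ => ?_
  rw [Finset.sum_mul]
  refine Finset.sum_congr rfl fun k _ => ?_
  ring

/-- contrapositive form: if a PMD is star-incompatible w.r.t. x*, then for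
every pure state of Schmidt rank d the resulting assemblage is star-steerable w.r.t. x*,
i.e. it admits no star-unsteerable decomposition. -/
theorem starIncompatible_imp_starSteerable (d : ℕ) (hd : 0 < d)
    (A X : Type) [Fintype A] [Fintype X] (xs : X)
    (M : X → A → Matrix (Fin d) (Fin d) ℂ)
    (hpsd : ∀ x a, (M x a).PosSemidef) (hpovm : ∀ x, ∑ a, M x a = 1)
    (hincomp : ¬ ∃ J : X → A → A → Matrix (Fin d) (Fin d) ℂ,
      (∀ x, x ≠ xs → ∀ a b, (J x a b).PosSemidef) ∧
      (∀ x, x ≠ xs → ∑ a, ∑ b, J x a b = 1) ∧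
      (∀ x, x ≠ xs → ∀ a, ∑ b, J x a b = M x a) ∧
      (∀ x, x ≠ xs → ∀ b, ∑ a, J x a b = M xs b)) :
    ∀ ψ : Fin d × Fin d → ℂ,
      (∑ p : Fin d × Fin d, Complex.normSq (ψ p) = 1) →
      (Matrix.of fun i j : Fin d => ψ (i, j)).rank = d →
      ¬ ∃ ρ : X → A → A → Matrix (Fin d) (Fin d) ℂ,
        (∀ x, x ≠ xs → ∀ a b, (ρ x a b).PosSemidef) ∧
        (∀ x, x ≠ xs → ∀ a, ∑ b, ρ x a b
            = trA ((M x a ⊗ₖ (1 : Matrix (Fin d) (Fin d) ℂ)) * Matrix.vecMulVec ψ (star ψ))) ∧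
        (∀ x, x ≠ xs → ∀ b, ∑ a, ρ x a b
            = trA ((M xs b ⊗ₖ (1 : Matrix (Fin d) (Fin d) ℂ)) * Matrix.vecMulVec ψ (star ψ))) := by
  intro ψ hnorm hrank
  rintro ⟨ρ, hρpsd, hρa, hρb⟩
  apply hincomp
  set Ψ : Matrix (Fin d) (Fin d) ℂ := Matrix.of fun i j : Fin d => ψ (i, j) with hΨ
  set C : Matrix (Fin d) (Fin d) ℂ := Ψᵀ with hC
  -- Ψ (hence C) is invertible
  have hΨunit : IsUnit Ψ := by
    rw [← Matrix.mulVec_surjective_iff_isUnit]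
    have hrange : LinearMap.range Ψ.mulVecLin = ⊤ := by
      apply Submodule.eq_top_of_finrank_eq
      rw [Matrix.rank] at hrank
      rw [hrank, Module.finrank_pi, Fintype.card_fin]
    intro v
    exact LinearMap.range_eq_top.mp hrange v
  have hCdet : IsUnit C.det := by
    rw [hC, Matrix.det_transpose]
    exact (Matrix.isUnit_iff_isUnit_det Ψ).mp hΨunit
  have hCHdet : IsUnit Cᴴ.det := by
    rw [Matrix.det_conjTranspose]
    exact hCdet.star
  -- the inversion lemma
  have hinv : ∀ N : Matrix (Fin d) (Fin d) ℂ, (C⁻¹ * (C * Nᵀ * Cᴴ) * (C⁻¹)ᴴ)ᵀ = N := by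
    intro N
    rw [Matrix.conjTranspose_nonsing_inv]
    calc (C⁻¹ * (C * Nᵀ * Cᴴ) * (Cᴴ)⁻¹)ᵀ
        = ((C⁻¹ * C) * Nᵀ * (Cᴴ * (Cᴴ)⁻¹))ᵀ := by simp only [Matrix.mul_assoc]
      _ = N := by
          rw [Matrix.nonsing_inv_mul _ hCdet, Matrix.mul_nonsing_inv _ hCHdet, Matrix.one_mul,
            Matrix.mul_one, Matrix.transpose_transpose]
  refine ⟨fun x a b => (C⁻¹ * ρ x a b * (C⁻¹)ᴴ)ᵀ, ?_, ?_, ?_, ?_⟩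
  · intro x hx a b
    exact ((hρpsd x hx a b).mul_mul_conjTranspose_same C⁻¹).transpose
  · intro x hx
    have : ∀ a, ∑ b, (C⁻¹ * ρ x a b * (C⁻¹)ᴴ)ᵀ = M x a := by
      intro a
      rw [← Matrix.transpose_sum, ← Finset.sum_mul, ← Matrix.mul_sum, hρa x hx a,
        trA_formula, ← hΨ, ← hC, hinv]
    rw [Finset.sum_congr rfl fun a _ => this a, hpovm x]
  · intro x hx a
    rw [← Matrix.transpose_sum, ← Finset.sum_mul, ← Matrix.mul_sum, hρa x hx a,
      trA_formula, ← hΨ, ← hC, hinv]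
  · intro x hx b
    rw [← Matrix.transpose_sum, ← Finset.sum_mul, ← Matrix.mul_sum, hρb x hx b,
      trA_formula, ← hΨ, ← hC, hinv]
end

section
/- Let ρ_AB be a density operator on H_A ⊗ H_B with ρ_A = Tr_B ρ_AB, and let {G^{a,e|x}} be a feasible solution of the prepare-and-measure guessing SDP for a PMD {M^{a|x}}. Then τ^{a,e|x} := Tr_A[(G^{a,e|x} ⊗ 𝟙)ρ_AB] is a feasible solution of the assemblage guessing SDP for the assemblage σ^{a|x} = Tr_A[(M^{a|x} ⊗ 𝟙)ρ_AB], with the same objective value: Σ_e Tr τ^{e,e|x*} = Σ_e Tr[G^{e,e|x*} ρ_A]. Consequently, p_guess^{x*}(σ(M, ρ_AB)) ≥ p_guess^{x*}(M, ρ_A). -/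
open Matrix BigOperators Kronecker ComplexOrder

section Helpers

variable {dA dB : Type*} [Fintype dA] [Fintype dB] [DecidableEq dA] [DecidableEq dB]

lemma kron_mul_apply (Gm : Matrix dA dA ℂ) (ρ : Matrix (dA × dB) (dA × dB) ℂ)
    (i : dA) (j : dB) (p : dA × dB) :
    ((Gm ⊗ₖ (1 : Matrix dB dB ℂ)) * ρ) (i, j) p = ∑ k, Gm i k * ρ (k, j) p := by
  rw [Matrix.mul_apply, Fintype.sum_prod_type]
  refine Finset.sum_congr rfl fun k _ => ?_
  simp [Matrix.one_apply, mul_ite, ite_mul, mul_assoc]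

lemma mul_kron_apply (Gm : Matrix dA dA ℂ) (ρ : Matrix (dA × dB) (dA × dB) ℂ)
    (i : dA) (j : dB) (p : dA × dB) :
    (ρ * (Gm ⊗ₖ (1 : Matrix dB dB ℂ))) p (i, j) = ∑ k, ρ p (k, j) * Gm k i := by
  rw [Matrix.mul_apply, Fintype.sum_prod_type]
  refine Finset.sum_congr rfl fun k _ => ?_
  simp [Matrix.one_apply, mul_ite, ite_mul]

lemma trA_cyc (Gm : Matrix dA dA ℂ) (ρ : Matrix (dA × dB) (dA × dB) ℂ) :
    trA ((Gm ⊗ₖ (1 : Matrix dB dB ℂ)) * ρ) = trA (ρ * (Gm ⊗ₖ (1 : Matrix dB dB ℂ))) := by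
  ext j j'
  simp only [trA, Matrix.of_apply, kron_mul_apply, mul_kron_apply]
  rw [Finset.sum_comm]
  exact Finset.sum_congr rfl fun k _ => Finset.sum_congr rfl fun i _ => mul_comm _ _

lemma trA_eq_sum_submatrix (M : Matrix (dA × dB) (dA × dB) ℂ) :
    trA M = ∑ i : dA, M.submatrix (fun j => (i, j)) (fun j => (i, j)) := by
  ext j j'
  simp [trA, Matrix.sum_apply]

lemma posSemidef_sum {n ι : Type*} [Fintype n] (s : Finset ι) (f : ι → Matrix n n ℂ)
    (h : ∀ i ∈ s, (f i).PosSemidef) : (∑ i ∈ s, f i).PosSemidef :=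
  Finset.sum_induction f _ (fun _ _ ha hb => ha.add hb) Matrix.PosSemidef.zero h

lemma trA_posSemidef {M : Matrix (dA × dB) (dA × dB) ℂ} (hM : M.PosSemidef) :
    (trA M).PosSemidef := by
  rw [trA_eq_sum_submatrix]
  exact posSemidef_sum _ _ fun i _ => hM.submatrix _

lemma kron_psd_conj (Gm : Matrix dA dA ℂ) (hG : Gm.PosSemidef)
    (ρ : Matrix (dA × dB) (dA × dB) ℂ) (hρ : ρ.PosSemidef) :
    (trA ((Gm ⊗ₖ (1 : Matrix dB dB ℂ)) * ρ)).PosSemidef := by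
  obtain ⟨B, rfl⟩ : ∃ B : Matrix dA dA ℂ, Gm = Bᴴ * B := by
    open scoped MatrixOrder in
    obtain ⟨B, rfl⟩ := CStarAlgebra.nonneg_iff_eq_star_mul_self.mp hG.nonneg
    exact ⟨B, rfl⟩
  have h1 : (Bᴴ * B) ⊗ₖ (1 : Matrix dB dB ℂ)
      = (Bᴴ ⊗ₖ (1 : Matrix dB dB ℂ)) * (B ⊗ₖ (1 : Matrix dB dB ℂ)) := by
    rw [← Matrix.mul_kronecker_mul, Matrix.one_mul]
  rw [h1, Matrix.mul_assoc, trA_cyc]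
  have h2 : Bᴴ ⊗ₖ (1 : Matrix dB dB ℂ) = (B ⊗ₖ (1 : Matrix dB dB ℂ))ᴴ := by
    ext ⟨i, j⟩ ⟨k, l⟩
    by_cases h : j = l <;>
      simp [Matrix.conjTranspose_apply, Matrix.one_apply, h, eq_comm]
  rw [h2]
  exact trA_posSemidef (hρ.mul_mul_conjTranspose_same _)

lemma trA_sum' {ι : Type*} (s : Finset ι) (f : ι → Matrix (dA × dB) (dA × dB) ℂ) :
    trA (∑ i ∈ s, f i) = ∑ i ∈ s, trA (f i) := by
  ext j j'
  simp only [trA, Matrix.of_apply, Matrix.sum_apply]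
  rw [Finset.sum_comm]

lemma sum_kron {ι : Type*} (s : Finset ι) (f : ι → Matrix dA dA ℂ) (B : Matrix dB dB ℂ) :
    (∑ i ∈ s, f i) ⊗ₖ B = ∑ i ∈ s, (f i ⊗ₖ B) := by
  ext p q
  simp [Matrix.sum_apply, Finset.sum_mul]

lemma trace_trA (M : Matrix (dA × dB) (dA × dB) ℂ) : (trA M).trace = M.trace := by
  simp only [Matrix.trace, Matrix.diag, trA, Matrix.of_apply, Fintype.sum_prod_type]
  rw [Finset.sum_comm]

lemma trace_trA_kron (Gm : Matrix dA dA ℂ) (ρ : Matrix (dA × dB) (dA × dB) ℂ) :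
    (trA ((Gm ⊗ₖ (1 : Matrix dB dB ℂ)) * ρ)).trace
      = (Gm * Matrix.of fun i i' => ∑ j, ρ (i, j) (i', j)).trace := by
  have h3 : ∀ f : dA → dA → dB → ℂ,
      (∑ j, ∑ i, ∑ k, f i k j) = ∑ i, ∑ k, ∑ j, f i k j := by
    intro f
    rw [Finset.sum_comm]
    exact Finset.sum_congr rfl fun i _ => Finset.sum_comm
  simp only [Matrix.trace, Matrix.diag, trA, Matrix.of_apply, kron_mul_apply]
  simp only [Matrix.mul_apply, Matrix.of_apply, Finset.mul_sum]
  exact h3 fun i k j => Gm i k * ρ (k, j) (i, j)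

lemma psd_trace_nonneg {n : Type*} [Fintype n] [DecidableEq n] {M : Matrix n n ℂ}
    (hM : M.PosSemidef) : 0 ≤ M.trace := by
  rw [Matrix.trace]
  refine Finset.sum_nonneg fun i _ => ?_
  exact hM.diag_nonneg

end Helpers

/-- The prepare-and-measure guessing probability for a PMD `M`, target setting `xs`
and state `ρA`. -/
noncomputable def pguessPM {dA : Type*} [Fintype dA] {A X : Type} [Fintype A] [Fintype X]
    (M : X → A → Matrix dA dA ℂ) (xs : X) (ρA : Matrix dA dA ℂ) : ℝ :=
  sSup {r : ℝ | ∃ G : X → A → A → Matrix dA dA ℂ,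
    (∀ x a e, (G x a e).PosSemidef) ∧
    (∀ x a, ∑ e, G x a e = M x a) ∧
    (∀ x e, ∑ a, G x a e = ∑ a, G xs a e) ∧
    r = (∑ e, (G xs e e * ρA).trace).re}

/-- The (one-sided device-independent) guessing probability of an assemblage `σ` for
target setting `xs`. -/
noncomputable def pguessAsm {dB : Type*} [Fintype dB] {A X : Type} [Fintype A] [Fintype X]
    (σ : X → A → Matrix dB dB ℂ) (xs : X) : ℝ :=
  sSup {r : ℝ | ∃ τ : X → A → A → Matrix dB dB ℂ,
    (∀ x a e, (τ x a e).PosSemidef) ∧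
    (∀ x a, ∑ e, τ x a e = σ x a) ∧
    (∀ x e, ∑ a, τ x a e = ∑ a, τ xs a e) ∧
    r = (∑ e, (τ xs e e).trace).re}

/-- pushing a feasible prepare-and-measure strategy through a shared state
gives a feasible assemblage strategy with the same objective value; consequently the
assemblage guessing probability dominates the prepare-and-measure one. -/
theorem assemblage_guess_ge_pm {dA dB : Type*} [Fintype dA] [Fintype dB]
    [DecidableEq dA] [DecidableEq dB]
    (A X : Type) [Fintype A] [Fintype X] (xs : X)
    (ρAB : Matrix (dA × dB) (dA × dB) ℂ) (hρ : ρAB.PosSemidef) (htr : ρAB.trace = 1)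
    (M : X → A → Matrix dA dA ℂ)
    (hpsd : ∀ x a, (M x a).PosSemidef) (hpovm : ∀ x, ∑ a, M x a = 1)
    (G : X → A → A → Matrix dA dA ℂ)
    (hGpsd : ∀ x a e, (G x a e).PosSemidef)
    (hGsum : ∀ x a, ∑ e, G x a e = M x a)
    (hGind : ∀ x e, ∑ a, G x a e = ∑ a, G xs a e) :
    let ρA : Matrix dA dA ℂ := Matrix.of fun i i' => ∑ j, ρAB (i, j) (i', j)
    let σ : X → A → Matrix dB dB ℂ :=
      fun x a => trA ((M x a ⊗ₖ (1 : Matrix dB dB ℂ)) * ρAB)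
    let τ : X → A → A → Matrix dB dB ℂ :=
      fun x a e => trA ((G x a e ⊗ₖ (1 : Matrix dB dB ℂ)) * ρAB)
    (∀ x a e, (τ x a e).PosSemidef) ∧
    (∀ x a, ∑ e, τ x a e = σ x a) ∧
    (∀ x e, ∑ a, τ x a e = ∑ a, τ xs a e) ∧
    (∑ e, (τ xs e e).trace = ∑ e, (G xs e e * ρA).trace) ∧
    pguessPM M xs ρA ≤ pguessAsm σ xs := by
  intro ρA σ τ
  -- generic transfer of feasibility
  have transfer : ∀ G' : X → A → A → Matrix dA dA ℂ,
      (∀ x a e, (G' x a e).PosSemidef) →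
      (∀ x a, ∑ e, G' x a e = M x a) →
      (∀ x e, ∑ a, G' x a e = ∑ a, G' xs a e) →
      (∀ x a e, (trA ((G' x a e ⊗ₖ (1 : Matrix dB dB ℂ)) * ρAB)).PosSemidef) ∧
      (∀ x a, ∑ e, trA ((G' x a e ⊗ₖ (1 : Matrix dB dB ℂ)) * ρAB) = σ x a) ∧
      (∀ x e, ∑ a, trA ((G' x a e ⊗ₖ (1 : Matrix dB dB ℂ)) * ρAB)
          = ∑ a, trA ((G' xs a e ⊗ₖ (1 : Matrix dB dB ℂ)) * ρAB)) ∧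
      (∀ e, (trA ((G' xs e e ⊗ₖ (1 : Matrix dB dB ℂ)) * ρAB)).trace
          = (G' xs e e * ρA).trace) := by
    intro G' hp hs hi
    refine ⟨fun x a e => kron_psd_conj _ (hp x a e) _ hρ, ?_, ?_,
      fun e => trace_trA_kron _ _⟩
    · intro x a
      show _ = trA ((M x a ⊗ₖ (1 : Matrix dB dB ℂ)) * ρAB)
      rw [← trA_sum', ← Finset.sum_mul, ← sum_kron, hs]
    · intro x e
      rw [← trA_sum', ← trA_sum', ← Finset.sum_mul, ← Finset.sum_mul, ← sum_kron, ← sum_kron,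
        hi]
  obtain ⟨h1, h2, h3, h4⟩ := transfer G hGpsd hGsum hGind
  refine ⟨h1, h2, h3, Finset.sum_congr rfl fun e _ => h4 e, ?_⟩
  -- the subset / sSup argument
  apply csSup_le_csSup
  · -- BddAbove of assemblage set
    refine ⟨1, fun r hr => ?_⟩
    obtain ⟨t, htp, hts, hti, rfl⟩ := hr
    have hbound : (∑ e, (t xs e e).trace) ≤ ∑ e, ∑ a, (t xs a e).trace := by
      refine Finset.sum_le_sum fun e _ => ?_
      exact Finset.single_le_sum (fun a _ => psd_trace_nonneg (htp xs a e)) (Finset.mem_univ e)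
    have heq : (∑ e, ∑ a, (t xs a e).trace) = 1 := by
      rw [Finset.sum_comm]
      have : ∀ a, (∑ e, (t xs a e).trace) = (σ xs a).trace := by
        intro a
        rw [← Matrix.trace_sum, hts xs a]
      simp only [this]
      have hσ : (∑ a, (σ xs a).trace) = ρAB.trace := by
        rw [← Matrix.trace_sum, ← trA_sum']
        have : (∑ a, (M xs a ⊗ₖ (1 : Matrix dB dB ℂ)) * ρAB) = ρAB := by
          rw [← Finset.sum_mul, ← sum_kron, hpovm, Matrix.one_kronecker_one, Matrix.one_mul]
        rw [this, trace_trA]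
      rw [hσ, htr]
    calc (∑ e, (t xs e e).trace).re ≤ (∑ e, ∑ a, (t xs a e).trace).re :=
          (Complex.le_def.mp hbound).1
      _ = 1 := by rw [heq]; simp
  · -- nonempty PM set
    exact ⟨(∑ e, (G xs e e * ρA).trace).re, G, hGpsd, hGsum, hGind, rfl⟩
  · -- subset
    rintro r ⟨G', hp, hs, hi, rfl⟩
    obtain ⟨k1, k2, k3, k4⟩ := transfer G' hp hs hi
    exact ⟨fun x a e => trA ((G' x a e ⊗ₖ (1 : Matrix dB dB ℂ)) * ρAB), k1, k2, k3,
      by rw [Finset.sum_congr rfl fun e _ => k4 e]⟩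
end

section
/- Star-incompatibility weight bound: let the PMD {M^{a|x}} decompose as M^{a|x} = (1−w)F^{a|x} + w E^{a|x} where {F^{a|x}} is a star-compatible PMD w.r.t. x* and {E^{a|x}} is any PMD, w ∈ [0,1]. Then for any density operator ρ_A, the prepare-and-measure guessing probability satisfies p_guess^{x*}(M, ρ_A) ≥ 1 − w(1 − 1/|A|). -/
open Matrix BigOperators ComplexOrder

private lemma psd_realSmul {n : Type*} [Fintype n] {c : ℝ} (hc : 0 ≤ c)
    {P : Matrix n n ℂ} (hP : P.PosSemidef) : ((c : ℂ) • P).PosSemidef := by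
  constructor
  · unfold Matrix.IsHermitian
    rw [conjTranspose_smul, hP.isHermitian.eq]
    simp
  · exact (hP.smul (a := (c:ℂ)) (by exact_mod_cast hc)).2

private lemma trace_mul_psd_nonneg {n : Type*} [Fintype n] [DecidableEq n]
    {P Q : Matrix n n ℂ} (hP : P.PosSemidef) (hQ : Q.PosSemidef) :
    0 ≤ ((P * Q).trace).re := by
  obtain ⟨B, rfl⟩ : ∃ B : Matrix n n ℂ, Q = star B * B := by
    letI := Matrix.instCStarAlgebra (n := n)
    open scoped MatrixOrder in exact CStarAlgebra.nonneg_iff_eq_star_mul_self.mp hQ.nonneg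
  rw [star_eq_conjTranspose]
  rw [← Matrix.mul_assoc, trace_mul_comm]
  have hS : (B * (P * Bᴴ)).PosSemidef := by
    have := hP.mul_mul_conjTranspose_same B
    rwa [Matrix.mul_assoc] at this
  rw [Matrix.trace]
  simp only [Complex.re_sum]
  apply Finset.sum_nonneg
  intro i _
  have := hS.re_dotProduct_nonneg (Pi.single i 1)
  simpa [Matrix.diag, dotProduct, mulVec, Pi.single_apply] using this

/-- if M = (1−w)F + wE with F star-compatible w.r.t. x*, then the
prepare-and-measure guessing probability of M is at least 1 − w(1 − 1/|A|). -/
theorem pguess_ge_of_weight_decomposition {dA : Type*} [Fintype dA] [DecidableEq dA]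
    (A X : Type) [Fintype A] [DecidableEq A] [Nonempty A] [Fintype X] [DecidableEq X] (xs : X)
    (M F E : X → A → Matrix dA dA ℂ) (w : ℝ) (hw0 : 0 ≤ w) (hw1 : w ≤ 1)
    (hFpsd : ∀ x a, (F x a).PosSemidef) (hFpovm : ∀ x, ∑ a, F x a = 1)
    (hEpsd : ∀ x a, (E x a).PosSemidef) (hEpovm : ∀ x, ∑ a, E x a = 1)
    (hM : ∀ x a, M x a = ((1 - w : ℝ) : ℂ) • F x a + ((w : ℝ) : ℂ) • E x a)
    (hFcompat : ∃ J : X → A → A → Matrix dA dA ℂ,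
      (∀ x, x ≠ xs → ∀ a b, (J x a b).PosSemidef) ∧
      (∀ x, x ≠ xs → ∑ a, ∑ b, J x a b = 1) ∧
      (∀ x, x ≠ xs → ∀ a, ∑ b, J x a b = F x a) ∧
      (∀ x, x ≠ xs → ∀ b, ∑ a, J x a b = F xs b))
    (ρA : Matrix dA dA ℂ) (hρ : ρA.PosSemidef) (htr : ρA.trace = 1) :
    1 - w * (1 - 1 / Fintype.card A) ≤ pguessPM M xs ρA := by
  obtain ⟨J, hJpsd, _hJnorm, hJF, hJFxs⟩ := hFcompat
  set n : ℕ := Fintype.card A with hn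
  have hnpos : 0 < n := Fintype.card_pos
  have hnR : (0:ℝ) < (n:ℝ) := by exact_mod_cast hnpos
  -- the auxiliary strategies
  set G1 : X → A → A → Matrix dA dA ℂ :=
    fun x a e => if x = xs then (if a = e then F xs a else 0) else J x a e with hG1
  set G : X → A → A → Matrix dA dA ℂ :=
    fun x a e => ((1 - w : ℝ) : ℂ) • G1 x a e + ((w / n : ℝ) : ℂ) • E x a with hG
  have hG1psd : ∀ x a e, (G1 x a e).PosSemidef := by
    intro x a e
    by_cases hx : x = xs
    · subst hx
      by_cases hae : a = e <;> simp [hG1, hae, hFpsd, Matrix.PosSemidef.zero]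
    · simpa [hG1, hx] using hJpsd x hx a e
  have hGpsd : ∀ x a e, (G x a e).PosSemidef := by
    intro x a e
    exact (psd_realSmul (by linarith) (hG1psd x a e)).add
      (psd_realSmul (div_nonneg hw0 hnR.le) (hEpsd x a))
  -- sum over e of G1 equals F
  have hG1sumE : ∀ x a, ∑ e, G1 x a e = F x a := by
    intro x a
    by_cases hx : x = xs
    · subst hx
      simp [hG1]
    · simp only [hG1, if_neg hx]
      exact hJF x hx a
  -- sum over a of G1 equals F xs e
  have hG1sumA : ∀ x e, ∑ a, G1 x a e = F xs e := by
    intro x e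
    by_cases hx : x = xs
    · subst hx
      simp [hG1]
    · simp only [hG1, if_neg hx]
      exact hJFxs x hx e
  -- marginal condition
  have hGmargE : ∀ x a, ∑ e, G x a e = M x a := by
    intro x a
    simp only [hG]
    rw [Finset.sum_add_distrib, ← Finset.smul_sum, hG1sumE, Finset.sum_const,
      Finset.card_univ, hM]
    congr 1
    rw [← Nat.cast_smul_eq_nsmul ℂ, smul_smul]
    congr 1
    push_cast
    field_simp
    rw [← hn]; ring
  have hGmargA : ∀ x e, ∑ a, G x a e = ∑ a, G xs a e := by
    intro x e
    have key : ∀ y : X, ∑ a, G y a e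
        = ((1 - w : ℝ) : ℂ) • F xs e + ((w / n : ℝ) : ℂ) • (1 : Matrix dA dA ℂ) := by
      intro y
      simp only [hG]
      rw [Finset.sum_add_distrib, ← Finset.smul_sum, ← Finset.smul_sum, hG1sumA, hEpovm]
    rw [key x, key xs]
  -- the value of the strategy G
  have hval : (∑ e, (G xs e e * ρA).trace).re = 1 - w * (1 - 1 / n) := by
    have hGxs : ∀ e : A, G xs e e = ((1 - w : ℝ) : ℂ) • F xs e + ((w / n : ℝ) : ℂ) • E xs e := by
      intro e; simp [hG, hG1]
    have : ∑ e, (G xs e e * ρA).trace = ((∑ e, G xs e e) * ρA).trace := by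
      rw [Finset.sum_mul, trace_sum]
    rw [this]
    have hsum : ∑ e : A, G xs e e
        = ((1 - w : ℝ) : ℂ) • (1 : Matrix dA dA ℂ) + ((w / n : ℝ) : ℂ) • 1 := by
      simp only [hGxs]
      rw [Finset.sum_add_distrib, ← Finset.smul_sum, ← Finset.smul_sum, hFpovm, hEpovm]
    rw [hsum, Matrix.add_mul, Matrix.smul_mul, Matrix.smul_mul, Matrix.one_mul,
      trace_add, trace_smul, trace_smul, htr]
    push_cast
    simp
    ring
  -- membership
  have hmem : (1 - w * (1 - 1 / (n:ℝ))) ∈ {r : ℝ | ∃ G : X → A → A → Matrix dA dA ℂ,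
      (∀ x a e, (G x a e).PosSemidef) ∧
      (∀ x a, ∑ e, G x a e = M x a) ∧
      (∀ x e, ∑ a, G x a e = ∑ a, G xs a e) ∧
      r = (∑ e, (G xs e e * ρA).trace).re} := ⟨G, hGpsd, hGmargE, hGmargA, hval.symm⟩
  -- boundedness
  have hbdd : BddAbove {r : ℝ | ∃ G : X → A → A → Matrix dA dA ℂ,
      (∀ x a e, (G x a e).PosSemidef) ∧
      (∀ x a, ∑ e, G x a e = M x a) ∧
      (∀ x e, ∑ a, G x a e = ∑ a, G xs a e) ∧
      r = (∑ e, (G xs e e * ρA).trace).re} := by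
    refine ⟨1, fun r hr => ?_⟩
    obtain ⟨H, hHpsd, hHE, _, hrval⟩ := hr
    have hle : ∀ e : A, ((H xs e e * ρA).trace).re ≤ ∑ a, ((H xs a e * ρA).trace).re := by
      intro e
      exact Finset.single_le_sum
        (fun a _ => trace_mul_psd_nonneg (hHpsd xs a e) hρ) (Finset.mem_univ e)
    have hsumM : ∑ a, M xs a = (1 : Matrix dA dA ℂ) := by
      simp only [hM]
      rw [Finset.sum_add_distrib, ← Finset.smul_sum, ← Finset.smul_sum, hFpovm, hEpovm,
        ← add_smul]
      push_cast
      simp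
    have htot : ∑ e, ∑ a, ((H xs a e * ρA).trace).re = 1 := by
      have : ∑ e, ∑ a, (H xs a e * ρA).trace = ((∑ a, M xs a) * ρA).trace := by
        rw [Finset.sum_comm]
        simp_rw [← trace_sum, ← Finset.sum_mul, hHE]
      calc ∑ e, ∑ a, ((H xs a e * ρA).trace).re
          = (∑ e, ∑ a, (H xs a e * ρA).trace).re := by simp [Complex.re_sum]
        _ = 1 := by rw [this, hsumM, Matrix.one_mul, htr]; simp
    calc r = (∑ e, (H xs e e * ρA).trace).re := hrval
      _ = ∑ e, ((H xs e e * ρA).trace).re := by simp [Complex.re_sum]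
      _ ≤ ∑ e, ∑ a, ((H xs a e * ρA).trace).re := Finset.sum_le_sum fun e _ => hle e
      _ = 1 := htot
  have := le_csSup hbdd hmem
  simpa [pguessPM, hn] using this
end

section
/- For qubit measurements M^{±|i} = (𝟙 ± η σᵢ)/2 with i ∈ {1,2,3} (Pauli X, Y, Z) and η ∈ [0,1], if η ≤ 1/√2 then the pair {M^{±|1}, M^{±|2}} is jointly measurable: the four operators G^{a,b} = (1/4)(𝟙 + aησ₁ + bησ₂), a,b ∈ {+1,−1}, are positive semidefinite, sum to the identity, and have marginals Σ_b G^{a,b} = M^{a|1} and Σ_a G^{a,b} = M^{b|2}. -/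
open Matrix BigOperators ComplexOrder

private lemma psd_aux (c x y : ℝ) (hc : 0 ≤ c) (h : x^2 + y^2 ≤ 1) :
    (!![(c : ℂ), c*(x - y*Complex.I); c*(x + y*Complex.I), (c:ℂ)] :
      Matrix (Fin 2) (Fin 2) ℂ).PosSemidef := by
  rw [Matrix.posSemidef_iff_dotProduct_mulVec]
  constructor
  · ext i j
    fin_cases i <;> fin_cases j <;>
      simp [Matrix.conjTranspose_apply, Complex.ext_iff]
  · intro v
    simp only [dotProduct, Matrix.mulVec, Fin.sum_univ_two, Pi.star_apply,
      Matrix.cons_val', Matrix.cons_val_zero, Matrix.cons_val_one, Matrix.head_cons,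
      Matrix.empty_val', Matrix.cons_val_fin_one, Matrix.head_fin_const, Matrix.of_apply]
    rw [Complex.le_def]
    set a := (v 0).re
    set b := (v 0).im
    set p := (v 1).re
    set q := (v 1).im
    constructor
    · simp only [Complex.add_re, Complex.mul_re, Complex.mul_im, Complex.sub_re, Complex.sub_im,
        Complex.add_im, Complex.ofReal_re, Complex.ofReal_im, Complex.I_re, Complex.I_im,
        RCLike.star_def, Complex.conj_re, Complex.conj_im, Complex.zero_re]
      nlinarith [sq_nonneg (x*(a*q - b*p) - y*(a*p + b*q)),
        mul_nonneg hc (sq_nonneg (a - (x*p + y*q))), mul_nonneg hc (sq_nonneg (b + (x*q - y*p))),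
        mul_nonneg hc (sq_nonneg (a + (x*p + y*q))), mul_nonneg hc (sq_nonneg (b - (x*q - y*p))),
        mul_nonneg hc (mul_nonneg (sub_nonneg.2 h) (add_nonneg (sq_nonneg p) (sq_nonneg q)))]
    · simp only [Complex.add_im, Complex.mul_re, Complex.mul_im, Complex.sub_re, Complex.sub_im,
        Complex.add_re, Complex.ofReal_re, Complex.ofReal_im, Complex.I_re, Complex.I_im,
        RCLike.star_def, Complex.conj_re, Complex.conj_im, Complex.zero_im]
      ring

private lemma Gmat (x y : ℝ) :
    ((1 / 4 : ℝ) : ℂ) • ((1 : Matrix (Fin 2) (Fin 2) ℂ)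
        + ((x : ℝ) : ℂ) • !![0, 1; 1, 0] + ((y : ℝ) : ℂ) • !![0, -Complex.I; Complex.I, 0])
      = !![((1/4 : ℝ) : ℂ), (1/4 : ℝ)*((x : ℂ) - (y : ℂ)*Complex.I);
          (1/4 : ℝ)*((x : ℂ) + (y : ℂ)*Complex.I), ((1/4 : ℝ) : ℂ)] := by
  ext i j
  fin_cases i <;> fin_cases j <;> simp [Matrix.one_apply, Complex.ext_iff] <;> ring

private lemma margB (x u v : ℝ) (huv : v = -u) :
    ((1 / 4 : ℝ) : ℂ) • ((1 : Matrix (Fin 2) (Fin 2) ℂ)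
        + ((x : ℝ) : ℂ) • !![0, 1; 1, 0] + ((u : ℝ) : ℂ) • !![0, -Complex.I; Complex.I, 0])
      + ((1 / 4 : ℝ) : ℂ) • ((1 : Matrix (Fin 2) (Fin 2) ℂ)
        + ((x : ℝ) : ℂ) • !![0, 1; 1, 0] + ((v : ℝ) : ℂ) • !![0, -Complex.I; Complex.I, 0])
      = ((1 / 2 : ℝ) : ℂ) • ((1 : Matrix (Fin 2) (Fin 2) ℂ) + ((x : ℝ) : ℂ) • !![0, 1; 1, 0]) := by
  subst huv
  ext i j
  fin_cases i <;> fin_cases j <;>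
    simp [Matrix.one_apply, Complex.ext_iff] <;> ring

private lemma margA (y u v : ℝ) (huv : v = -u) :
    ((1 / 4 : ℝ) : ℂ) • ((1 : Matrix (Fin 2) (Fin 2) ℂ)
        + ((u : ℝ) : ℂ) • !![0, 1; 1, 0] + ((y : ℝ) : ℂ) • !![0, -Complex.I; Complex.I, 0])
      + ((1 / 4 : ℝ) : ℂ) • ((1 : Matrix (Fin 2) (Fin 2) ℂ)
        + ((v : ℝ) : ℂ) • !![0, 1; 1, 0] + ((y : ℝ) : ℂ) • !![0, -Complex.I; Complex.I, 0])
      = ((1 / 2 : ℝ) : ℂ) • ((1 : Matrix (Fin 2) (Fin 2) ℂ)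
          + ((y : ℝ) : ℂ) • !![0, -Complex.I; Complex.I, 0]) := by
  subst huv
  ext i j
  fin_cases i <;> fin_cases j <;>
    simp [Matrix.one_apply, Complex.ext_iff] <;> ring

private lemma totsum (u v : ℝ) (huv : v = -u) :
    ((1 / 2 : ℝ) : ℂ) • ((1 : Matrix (Fin 2) (Fin 2) ℂ) + ((u : ℝ) : ℂ) • !![0, 1; 1, 0])
      + ((1 / 2 : ℝ) : ℂ) • ((1 : Matrix (Fin 2) (Fin 2) ℂ) + ((v : ℝ) : ℂ) • !![0, 1; 1, 0])
      = 1 := by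
  subst huv
  ext i j
  fin_cases i <;> fin_cases j <;>
    simp [Matrix.one_apply, Complex.ext_iff] <;> norm_num

/-- for η ≤ 1/√2, the noisy Pauli-X and Pauli-Y qubit measurements are
jointly measurable, with joint POVM G^{a,b} = (1/4)(𝟙 + aησ₁ + bησ₂). -/
theorem pauliXY_jointly_measurable (η : ℝ) (hη0 : 0 ≤ η) (hη1 : η ≤ 1)
    (hη : η ≤ 1 / Real.sqrt 2) :
    let σ₁ : Matrix (Fin 2) (Fin 2) ℂ := !![0, 1; 1, 0]
    let σ₂ : Matrix (Fin 2) (Fin 2) ℂ := !![0, -Complex.I; Complex.I, 0]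
    let s : Bool → ℝ := fun b => if b then 1 else -1
    let G : Bool → Bool → Matrix (Fin 2) (Fin 2) ℂ :=
      fun a b => ((1 / 4 : ℝ) : ℂ) •
        ((1 : Matrix (Fin 2) (Fin 2) ℂ) + ((s a * η : ℝ) : ℂ) • σ₁ + ((s b * η : ℝ) : ℂ) • σ₂)
    let M : Fin 2 → Bool → Matrix (Fin 2) (Fin 2) ℂ :=
      fun i a => ((1 / 2 : ℝ) : ℂ) •
        ((1 : Matrix (Fin 2) (Fin 2) ℂ) + ((s a * η : ℝ) : ℂ) • (if i = 0 then σ₁ else σ₂))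
    (∀ a b, (G a b).PosSemidef) ∧
    (∑ a : Bool, ∑ b : Bool, G a b = 1) ∧
    (∀ a, ∑ b : Bool, G a b = M 0 a) ∧
    (∀ b, ∑ a : Bool, G a b = M 1 b) := by
  intro σ₁ σ₂ s G M
  have hsq : ∀ a : Bool, (s a) ^ 2 = 1 := by intro a; cases a <;> simp [s]
  have hneg : s false * η = -(s true * η) := by simp [s]
  have hη2 : η ^ 2 ≤ 1 / 2 := by
    have := mul_self_le_mul_self hη0 hη
    calc η ^ 2 = η * η := sq η
    _ ≤ (1 / Real.sqrt 2) * (1 / Real.sqrt 2) := this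
    _ = 1 / 2 := by
        rw [div_mul_div_comm, one_mul, Real.mul_self_sqrt (by norm_num : (0:ℝ) ≤ 2)]
  refine ⟨?_, ?_, ?_, ?_⟩
  · intro a b
    have hG : G a b = !![((1/4 : ℝ) : ℂ), (1/4 : ℝ)*(((s a * η : ℝ) : ℂ) - ((s b * η : ℝ) : ℂ)*Complex.I);
        (1/4 : ℝ)*(((s a * η : ℝ) : ℂ) + ((s b * η : ℝ) : ℂ)*Complex.I), ((1/4 : ℝ) : ℂ)] :=
      Gmat (s a * η) (s b * η)
    rw [hG]
    refine psd_aux _ _ _ (by norm_num) ?_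
    have : (s a * η) ^ 2 + (s b * η) ^ 2 = 2 * η ^ 2 := by
      rw [mul_pow, mul_pow, hsq, hsq]; ring
    rw [this]; linarith
  · simp only [Fintype.sum_bool]
    have h1 : G true true + G true false
        = ((1 / 2 : ℝ) : ℂ) • ((1 : Matrix (Fin 2) (Fin 2) ℂ) + ((s true * η : ℝ) : ℂ) • σ₁) :=
      margB (s true * η) (s true * η) (s false * η) hneg
    have h2 : G false true + G false false
        = ((1 / 2 : ℝ) : ℂ) • ((1 : Matrix (Fin 2) (Fin 2) ℂ) + ((s false * η : ℝ) : ℂ) • σ₁) :=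
      margB (s false * η) (s true * η) (s false * η) hneg
    rw [h1, h2]
    exact totsum (s true * η) (s false * η) hneg
  · intro a
    rw [Fintype.sum_bool]
    exact margB (s a * η) (s true * η) (s false * η) hneg
  · intro b
    rw [Fintype.sum_bool]
    exact margA (s b * η) (s true * η) (s false * η) hneg
end
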